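/- Let P ∈ ℚ[t] be a polynomial. Then P preserves formal sums of signs if and only if P can be written as P = Σ_{p=0}^N n_p f_p where each n_p is an integer divisible by 2^{⌊p/2⌋}. -/

import Mathlib

open Polynomial

/-- The integer-valued sign of a real number. -/
noncomputable def sgn (r : ℝ) : ℤ := if r < 0 then -1 else if 0 < r then 1 else 0

/-- A polynomial `P ∈ ℚ[t]` preserves formal sums of signs if for every `s ≥ 0` there is
a polynomial `Q` with integer coefficients in `s` variables such that
`P(X_1 + ⋯ + X_s) − Q` lies in the ideal generated by the `X_i^3 − X_i`. -/
def PreservesSumsOfSigns (P : Polynomial ℚ) : Prop :=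
  ∀ s : ℕ, ∃ Q : MvPolynomial (Fin s) ℤ,
    Polynomial.aeval (∑ i : Fin s, MvPolynomial.X i) P
        - MvPolynomial.map (Int.castRingHom ℚ) Q ∈
      Ideal.span (Set.range fun i : Fin s => MvPolynomial.X i ^ 3 - MvPolynomial.X i)

/-- The `p`-th binomial polynomial `f_p(t) = t(t−1)⋯(t−p+1)/p!`. -/
noncomputable def binomPoly (p : ℕ) : Polynomial ℚ :=
  ((p.factorial : ℚ)⁻¹) • descPochhammer ℚ p

lemma descPoch_comp_add_one (p : ℕ) :
    (descPochhammer ℚ (p+1)).comp (X + C 1) = (X + C 1) * descPochhammer ℚ p := by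
  rw [descPochhammer_succ_left, mul_comp, X_comp, comp_assoc]
  have : ((X:ℚ[X]) - 1).comp (X + C 1) = X := by
    rw [sub_comp, X_comp, one_comp]; simp
  rw [this, comp_X]

lemma binomPoly_pascal (p : ℕ) :
    (binomPoly (p+1)).comp (X + C 1) = binomPoly (p+1) + binomPoly p := by
  unfold binomPoly
  rw [smul_comp, descPoch_comp_add_one]
  rw [descPochhammer_succ_right]
  have h1 : (X + C 1 : ℚ[X]) * descPochhammer ℚ p
      = descPochhammer ℚ p * (X - (p:ℚ[X])) + C ((p:ℚ)+1) * descPochhammer ℚ p := by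
    have h0 : (C ((p:ℚ)+1) : ℚ[X]) = (p:ℚ[X]) + 1 := by
      rw [map_add, C_1, C_eq_natCast]
    rw [h0]
    simp only [C_1]
    ring
  rw [h1, smul_add]
  congr 1
  rw [smul_eq_C_mul, smul_eq_C_mul, ← mul_assoc, ← C_mul]
  congr 2
  rw [Nat.factorial_succ]
  push_cast
  field_simp

lemma binomPoly_zero_eq : binomPoly 0 = 1 := by simp [binomPoly]

lemma binomPoly_one_eq : binomPoly 1 = X := by simp [binomPoly]

lemma factorial_inv_ne_zero (p : ℕ) : ((p.factorial : ℚ))⁻¹ ≠ 0 := by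
  apply inv_ne_zero
  exact_mod_cast Nat.cast_ne_zero.mpr p.factorial_ne_zero

lemma binomPoly_natDegree (p : ℕ) : (binomPoly p).natDegree = p := by
  unfold binomPoly
  rw [smul_eq_C_mul, natDegree_C_mul (factorial_inv_ne_zero p), descPochhammer_natDegree]

lemma binomPoly_coeff_self (p : ℕ) : (binomPoly p).coeff p = ((p.factorial : ℚ))⁻¹ := by
  unfold binomPoly
  rw [coeff_smul]
  have h := (monic_descPochhammer ℚ p).coeff_natDegree
  rw [descPochhammer_natDegree] at h
  rw [h, smul_eq_mul, mul_one]

lemma binomPoly_coeff_eq_zero {p k : ℕ} (h : p < k) : (binomPoly p).coeff k = 0 :=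
  coeff_eq_zero_of_natDegree_lt (by rw [binomPoly_natDegree]; exact h)

lemma binomPoly_eval_zero (p : ℕ) : (binomPoly p).eval 0 = if p = 0 then 1 else 0 := by
  unfold binomPoly
  rw [eval_smul, descPochhammer_eval_zero]
  split
  · next h => subst h; simp
  · simp

-- shift compositions commute
lemma comp_shift_comm (P : ℚ[X]) (u v : ℚ[X]) (a b : ℚ)
    (hu : u = X + C a) (hv : v = X + C b) :
    (P.comp u).comp v = (P.comp v).comp u := by
  rw [hu, hv, comp_assoc, comp_assoc]
  congr 1
  simp [add_comp]
  ring

noncomputable def bL : Module.End ℚ ℚ[X] :=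
  (2:ℚ)⁻¹ • ((aeval (X + C 1)).toLinearMap - (aeval (X - C 1)).toLinearMap)

noncomputable def cL : Module.End ℚ ℚ[X] :=
  (2:ℚ)⁻¹ • ((aeval (X + C 1)).toLinearMap + (aeval (X - C 1)).toLinearMap
    - (2:ℚ) • LinearMap.id)

lemma bL_apply (P : ℚ[X]) :
    bL P = (2:ℚ)⁻¹ • (P.comp (X + C 1) - P.comp (X - C 1)) := by
  simp [bL, comp_eq_aeval]

lemma cL_apply (P : ℚ[X]) :
    cL P = (2:ℚ)⁻¹ • (P.comp (X + C 1) + P.comp (X - C 1) - (2:ℚ) • P) := by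
  simp [cL, comp_eq_aeval]

lemma comp_add_one_eq (P : ℚ[X]) : P.comp (X + C 1) = P + bL P + cL P := by
  rw [bL_apply, cL_apply]
  module

lemma comp_sub_one_eq (P : ℚ[X]) : P.comp (X - C 1) = P - bL P + cL P := by
  rw [bL_apply, cL_apply]
  module

lemma pascal_shift (p : ℕ) :
    binomPoly (p+1) = (binomPoly (p+1)).comp (X - C 1) + (binomPoly p).comp (X - C 1) := by
  have h := congrArg (fun q : ℚ[X] => q.comp (X - C 1)) (binomPoly_pascal p)
  simp only [add_comp] at h
  rw [comp_assoc] at h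
  have h2 : ((X + C 1 : ℚ[X])).comp (X - C 1) = X := by
    simp [add_comp]
  rw [h2, comp_X] at h
  exact h

lemma cL_binom (p : ℕ) :
    cL (binomPoly (p+2)) = (2:ℚ)⁻¹ • (binomPoly p).comp (X - C 1) := by
  rw [cL_apply]
  congr 1
  have e2 : (binomPoly (p+2)).comp (X - C 1)
      = binomPoly (p+2) - (binomPoly (p+1)).comp (X - C 1) :=
    eq_sub_of_add_eq (pascal_shift (p+1)).symm
  have e3 : (binomPoly (p+1)).comp (X - C 1) = binomPoly (p+1) - (binomPoly p).comp (X - C 1) :=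
    eq_sub_of_add_eq (pascal_shift p).symm
  have h1 : (binomPoly (p+1+1)).comp (X + C 1) = binomPoly (p+2) + binomPoly (p+1) :=
    binomPoly_pascal (p+1)
  rw [h1, e2, e3]
  module

lemma bL_binom (p : ℕ) :
    bL (binomPoly (p+1)) = (2:ℚ)⁻¹ • (binomPoly p + (binomPoly p).comp (X - C 1)) := by
  rw [bL_apply]
  congr 1
  have e2 : (binomPoly (p+1)).comp (X - C 1)
      = binomPoly (p+1) - (binomPoly p).comp (X - C 1) :=
    eq_sub_of_add_eq (pascal_shift p).symm
  rw [binomPoly_pascal p, e2]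
  module

lemma cL_binom_zero : cL (binomPoly 0) = 0 := by
  rw [cL_apply, binomPoly_zero_eq]
  simp only [one_comp]
  module

lemma cL_binom_one : cL (binomPoly 1) = 0 := by
  rw [cL_apply, binomPoly_one_eq]
  simp only [X_comp]
  module

lemma bL_binom_zero : bL (binomPoly 0) = 0 := by
  rw [bL_apply, binomPoly_zero_eq]
  simp only [one_comp]
  module

lemma cL_comp_shift (P : ℚ[X]) (a : ℚ) :
    cL (P.comp (X - C a)) = (cL P).comp (X - C a) := by
  have hs : (X - C a : ℚ[X]) = X + C (-a) := by rw [map_neg]; ring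
  have h1 : (P.comp (X - C a)).comp (X + C 1) = (P.comp (X + C 1)).comp (X - C a) :=
    comp_shift_comm P _ _ (-a) 1 hs rfl
  have h2 : (P.comp (X - C a)).comp (X - C 1) = (P.comp (X - C 1)).comp (X - C a) := by
    have := comp_shift_comm P (X - C a) (X - C 1) (-a) (-1) hs (by rw [map_neg]; ring)
    exact this
  rw [cL_apply, cL_apply, smul_comp, sub_comp, add_comp, smul_comp, h1, h2]

lemma bL_comp_shift (P : ℚ[X]) (a : ℚ) :
    bL (P.comp (X - C a)) = (bL P).comp (X - C a) := by
  have hs : (X - C a : ℚ[X]) = X + C (-a) := by rw [map_neg]; ring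
  have h1 : (P.comp (X - C a)).comp (X + C 1) = (P.comp (X + C 1)).comp (X - C a) :=
    comp_shift_comm P _ _ (-a) 1 hs rfl
  have h2 : (P.comp (X - C a)).comp (X - C 1) = (P.comp (X - C 1)).comp (X - C a) :=
    comp_shift_comm P (X - C a) (X - C 1) (-a) (-1) hs (by rw [map_neg]; ring)
  rw [bL_apply, bL_apply, smul_comp, sub_comp, h1, h2]

lemma cL_pow_comp_shift (m : ℕ) (P : ℚ[X]) (a : ℚ) :
    (cL ^ m) (P.comp (X - C a)) = ((cL ^ m) P).comp (X - C a) := by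
  induction m generalizing P with
  | zero => simp
  | succ m ih =>
      rw [pow_succ', Module.End.mul_apply, Module.End.mul_apply, ih, cL_comp_shift]

lemma cL_pow_binom_high : ∀ (m p : ℕ),
    (cL ^ m) (binomPoly (p + 2*m)) = ((2:ℚ)^m)⁻¹ • (binomPoly p).comp (X - C (m:ℚ)) := by
  intro m
  induction m with
  | zero => intro p; simp
  | succ m ih =>
      intro p
      have hidx : p + 2*(m+1) = (p + 2*m) + 2 := by ring
      rw [pow_succ, Module.End.mul_apply, hidx, cL_binom, map_smul, cL_pow_comp_shift, ih]
      rw [smul_comp, comp_assoc]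
      have hc : ((X - C (m:ℚ) : ℚ[X])).comp (X - C 1) = X - C ((m:ℚ)+1) := by
        rw [sub_comp, X_comp, C_comp]
        rw [map_add]
        ring
      rw [hc, smul_smul]
      congr 2
      · rw [pow_succ]
        field_simp
      · push_cast; ring
  
lemma cL_pow_binom_low : ∀ (m p : ℕ), p < 2*m → (cL ^ m) (binomPoly p) = 0 := by
  intro m
  induction m with
  | zero => intro p hp; omega
  | succ m ih =>
      intro p hp
      rw [pow_succ, Module.End.mul_apply]
      match p with
      | 0 => rw [cL_binom_zero, map_zero]
      | 1 => rw [cL_binom_one, map_zero]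
      | (q+2) =>
          rw [cL_binom, map_smul, cL_pow_comp_shift, ih q (by omega), zero_comp, smul_zero]

lemma cL_pow_binom_exact (m : ℕ) :
    (cL ^ m) (binomPoly (2*m)) = ((2:ℚ)^m)⁻¹ • (1 : ℚ[X]) := by
  have := cL_pow_binom_high m 0
  simpa [binomPoly_zero_eq, one_comp] using this

lemma cL_pow_bL_binom_exact (m : ℕ) :
    (cL ^ m) (bL (binomPoly (2*m+1))) = ((2:ℚ)^m)⁻¹ • (1 : ℚ[X]) := by
  rw [bL_binom, map_smul, map_add, cL_pow_comp_shift, cL_pow_binom_exact]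
  rw [smul_comp, one_comp]
  rw [smul_add, smul_smul]
  rw [← add_smul]
  norm_num
  congr 1
  ring

lemma cL_pow_bL_binom_low (m p : ℕ) (hp : p < 2*m+1) : (cL ^ m) (bL (binomPoly p)) = 0 := by
  match p with
  | 0 => rw [bL_binom_zero, map_zero]
  | (q+1) =>
      rw [bL_binom, map_smul, map_add, cL_pow_comp_shift, cL_pow_binom_low m q (by omega)]
      simp

lemma exists_binom_repr : ∀ (n : ℕ) (P : ℚ[X]), P.natDegree ≤ n →
    ∃ q : ℕ → ℚ, P = ∑ p ∈ Finset.range (n+1), q p • binomPoly p := by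
  intro n
  induction n with
  | zero =>
      intro P hP
      refine ⟨fun _ => P.coeff 0, ?_⟩
      rw [Finset.range_one, Finset.sum_singleton, binomPoly_zero_eq, smul_eq_C_mul, mul_one]
      exact eq_C_of_natDegree_le_zero hP
  | succ n ih =>
      intro P hP
      set a := ((n+1).factorial : ℚ) * P.coeff (n+1) with ha
      set R := P - a • binomPoly (n+1) with hR
      have hcoeff : R.coeff (n+1) = 0 := by
        rw [hR, coeff_sub, coeff_smul, binomPoly_coeff_self, ha, smul_eq_mul]
        field_simp
        ring
      have hdeg : R.natDegree ≤ n := by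
        rw [natDegree_le_iff_coeff_eq_zero]
        intro k hk
        rcases Nat.lt_or_ge (n+1) k with h | h
        · rw [hR, coeff_sub, coeff_smul, binomPoly_coeff_eq_zero h,
            coeff_eq_zero_of_natDegree_lt (lt_of_le_of_lt hP h), smul_zero, sub_zero]
        · have : k = n+1 := by omega
          rw [this]; exact hcoeff
      obtain ⟨q, hq⟩ := ih R hdeg
      refine ⟨Function.update q (n+1) a, ?_⟩
      rw [Finset.sum_range_succ]
      have hsum : ∑ p ∈ Finset.range (n+1), Function.update q (n+1) a p • binomPoly p
           = ∑ p ∈ Finset.range (n+1), q p • binomPoly p := by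
        apply Finset.sum_congr rfl
        intro p hp
        rw [Function.update_of_ne (by simp at hp; omega)]
      rw [hsum, Function.update_self, ← hq, hR]
      ring

lemma coeff_top_of_repr {n : ℕ} {P : ℚ[X]} {q : ℕ → ℚ}
    (h : P = ∑ p ∈ Finset.range (n+1), q p • binomPoly p) :
    P.coeff n = q n * ((n.factorial : ℚ))⁻¹ := by
  rw [h, finset_sum_coeff, Finset.sum_range_succ]
  have : ∀ p ∈ Finset.range n, (q p • binomPoly p).coeff n = 0 := by
    intro p hp
    simp only [Finset.mem_range] at hp
    rw [coeff_smul, binomPoly_coeff_eq_zero hp, smul_zero]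
  rw [Finset.sum_congr rfl this, Finset.sum_const_zero, zero_add, coeff_smul,
    binomPoly_coeff_self, smul_eq_mul]

noncomputable def gPoly (p : ℕ) : ℚ[X] := ((2:ℚ)^(p/2)) • binomPoly p

noncomputable def CSub : Submodule ℤ ℚ[X] := Submodule.span ℤ (Set.range gPoly)

lemma gPoly_mem (p : ℕ) : gPoly p ∈ CSub := Submodule.subset_span ⟨p, rfl⟩

lemma shift_gPoly_mem : ∀ p : ℕ, (gPoly p).comp (X - C 1) ∈ CSub := by
  intro p
  induction p using Nat.strong_induction_on with
  | _ p ih =>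
    match p with
    | 0 =>
        have : (gPoly 0).comp (X - C 1) = gPoly 0 := by
          simp [gPoly, binomPoly_zero_eq, one_comp]
        rw [this]; exact gPoly_mem 0
    | (p+1) =>
        have e2 : (binomPoly (p+1)).comp (X - C 1)
            = binomPoly (p+1) - (binomPoly p).comp (X - C 1) :=
          eq_sub_of_add_eq (pascal_shift p).symm
        have hd : (p+1)/2 = ((p+1)/2 - p/2) + p/2 := by omega
        have key : (gPoly (p+1)).comp (X - C 1)
            = gPoly (p+1) - ((2:ℤ)^((p+1)/2 - p/2)) • (gPoly p).comp (X - C 1) := by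
          unfold gPoly
          rw [smul_comp, e2, smul_sub, smul_comp]
          congr 1
          rw [← Int.cast_smul_eq_zsmul ℚ, smul_smul]
          congr 1
          push_cast
          rw [← pow_add, ← hd]
        rw [key]
        exact sub_mem (gPoly_mem (p+1)) (zsmul_mem (ih p (by omega)) _)

lemma shift_mem {P : ℚ[X]} (hP : P ∈ CSub) : P.comp (X - C 1) ∈ CSub := by
  induction hP using Submodule.span_induction with
  | mem x hx => obtain ⟨p, rfl⟩ := hx; exact shift_gPoly_mem p
  | zero => simp only [zero_comp]; exact zero_mem _
  | add x y _ _ hx hy => rw [add_comp]; exact add_mem hx hy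
  | smul z x _ hx => rw [← Int.cast_smul_eq_zsmul ℚ, smul_comp, Int.cast_smul_eq_zsmul ℚ]; exact zsmul_mem hx z

lemma cL_gPoly_mem (p : ℕ) : cL (gPoly p) ∈ CSub := by
  match p with
  | 0 => unfold gPoly; rw [map_smul, cL_binom_zero, smul_zero]; exact zero_mem _
  | 1 => unfold gPoly; rw [map_smul, cL_binom_one, smul_zero]; exact zero_mem _
  | (q+2) =>
      have h2 : (q+2)/2 = q/2 + 1 := by omega
      have key : cL (gPoly (q+2)) = (gPoly q).comp (X - C 1) := by
        unfold gPoly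
        rw [map_smul, cL_binom, smul_comp, h2, pow_succ]
        module
      rw [key]; exact shift_gPoly_mem q

lemma bL_gPoly_mem (p : ℕ) : bL (gPoly p) ∈ CSub := by
  match p with
  | 0 => unfold gPoly; rw [map_smul, bL_binom_zero, smul_zero]; exact zero_mem _
  | (q+1) =>
      rcases Nat.even_or_odd q with hq | hq
      · -- q even : p = q+1 odd
        match q, hq with
        | 0, _ =>
            have key : bL (gPoly 1) = gPoly 0 := by
              unfold gPoly
              rw [map_smul, bL_binom 0, binomPoly_zero_eq, one_comp]
              have h11 : (1 + 1 : ℚ[X]) = (2:ℚ) • 1 := by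
                rw [smul_eq_C_mul, mul_one, map_ofNat]; norm_num
              rw [h11]
              module
            rw [key]; exact gPoly_mem 0
        | (r+1), hq =>
            -- q = r+1 ≥ 1 even, so r odd ; f_q∘(X-1) = f_q - f_r∘(X-1)
            have hr : r % 2 = 1 := by
              rcases hq with ⟨k, hk⟩; omega
            have e2 : (binomPoly (r+1)).comp (X - C 1)
                = binomPoly (r+1) - (binomPoly r).comp (X - C 1) :=
              eq_sub_of_add_eq (pascal_shift r).symm
            have h1 : (r+2)/2 = r/2 + 1 := by omega
            have h4 : (r+1)/2 = r/2 + 1 := by omega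
            have key : bL (gPoly (r+2)) = gPoly (r+1) - (gPoly r).comp (X - C 1) := by
              unfold gPoly
              rw [map_smul, bL_binom (r+1), e2, smul_comp, h1, h4, pow_succ]
              module
            rw [key]
            exact sub_mem (gPoly_mem (r+1)) (shift_gPoly_mem r)
      · -- q odd : p = q+1 even
        have h1 : (q+1)/2 = q/2 + 1 := by
          have := Nat.odd_iff.mp hq; omega
        have key : bL (gPoly (q+1)) = gPoly q + (gPoly q).comp (X - C 1) := by
          unfold gPoly
          rw [map_smul, bL_binom q, smul_comp, h1, pow_succ]
          module
        rw [key]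
        exact add_mem (gPoly_mem q) (shift_gPoly_mem q)

lemma cL_mem {P : ℚ[X]} (hP : P ∈ CSub) : cL P ∈ CSub := by
  induction hP using Submodule.span_induction with
  | mem x hx => obtain ⟨p, rfl⟩ := hx; exact cL_gPoly_mem p
  | zero => rw [map_zero]; exact zero_mem _
  | add x y _ _ hx hy => rw [map_add]; exact add_mem hx hy
  | smul z x _ hx => rw [map_zsmul]; exact zsmul_mem hx z

lemma bL_mem {P : ℚ[X]} (hP : P ∈ CSub) : bL P ∈ CSub := by
  induction hP using Submodule.span_induction with
  | mem x hx => obtain ⟨p, rfl⟩ := hx; exact bL_gPoly_mem p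
  | zero => rw [map_zero]; exact zero_mem _
  | add x y _ _ hx hy => rw [map_add]; exact add_mem hx hy
  | smul z x _ hx => rw [map_zsmul]; exact zsmul_mem hx z

lemma eval_zero_mem {P : ℚ[X]} (hP : P ∈ CSub) : ∃ z : ℤ, P.eval 0 = z := by
  induction hP using Submodule.span_induction with
  | mem x hx =>
      obtain ⟨p, rfl⟩ := hx
      unfold gPoly
      rw [eval_smul, binomPoly_eval_zero]
      rcases eq_or_ne p 0 with h | h
      · exact ⟨1, by simp [h]⟩
      · exact ⟨0, by simp [h]⟩
  | zero => exact ⟨0, by simp⟩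
  | add x y _ _ hx hy =>
      obtain ⟨z1, h1⟩ := hx; obtain ⟨z2, h2⟩ := hy
      exact ⟨z1 + z2, by rw [eval_add, h1, h2]; push_cast; ring⟩
  | smul z x _ hx =>
      obtain ⟨w, hw⟩ := hx
      refine ⟨z * w, ?_⟩
      rw [← Int.cast_smul_eq_zsmul ℚ, eval_smul, hw, smul_eq_mul]
      push_cast; ring

lemma mem_CSub_iff (P : ℚ[X]) : P ∈ CSub ↔
    ∃ (N : ℕ) (n : ℕ → ℤ), (∀ p, (2 : ℤ) ^ (p / 2) ∣ n p) ∧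
      P = ∑ p ∈ Finset.range (N + 1), (n p : ℚ) • binomPoly p := by
  constructor
  · intro hP
    rw [CSub, Finsupp.mem_span_range_iff_exists_finsupp] at hP
    obtain ⟨c, hc⟩ := hP
    set N := c.support.sup id with hN
    refine ⟨N, fun p => 2^(p/2) * c p, fun p => dvd_mul_right _ _, ?_⟩
    have hsub : c.support ⊆ Finset.range (N+1) := by
      intro p hp
      rw [Finset.mem_range]
      have h := Finset.le_sup (f := id) hp
      simp only [id] at h
      omega
    have h1 : ∑ p ∈ Finset.range (N+1), ((2^(p/2) * c p : ℤ) : ℚ) • binomPoly p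
        = ∑ p ∈ Finset.range (N+1), c p • gPoly p := by
      apply Finset.sum_congr rfl
      intro p _
      rw [← Int.cast_smul_eq_zsmul ℚ (c p), gPoly, smul_smul]
      congr 1
      push_cast; ring
    rw [h1, ← Finset.sum_subset hsub (by intro x _ hx; rw [Finsupp.notMem_support_iff.mp hx, zero_smul])]
    rw [← hc, Finsupp.sum]
  · rintro ⟨N, n, hdvd, hP⟩
    rw [hP]
    apply Submodule.sum_mem
    intro p _
    obtain ⟨z, hz⟩ := hdvd p
    have hterm : ((n p : ℚ)) • binomPoly p = z • gPoly p := by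
      rw [hz, ← Int.cast_smul_eq_zsmul ℚ z, gPoly, smul_smul]
      congr 1
      push_cast; ring
    rw [hterm]
    exact zsmul_mem (gPoly_mem p) z

section MvStuff

noncomputable def sigS (s : ℕ) : MvPolynomial (Fin s) ℚ := ∑ i : Fin s, MvPolynomial.X i

noncomputable def idlS (s : ℕ) : Ideal (MvPolynomial (Fin s) ℚ) :=
  Ideal.span (Set.range fun i : Fin s => MvPolynomial.X i ^ 3 - MvPolynomial.X i)

def GS (s : ℕ) (P : ℚ[X]) : Prop :=
  ∃ Q : MvPolynomial (Fin s) ℤ,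
    Polynomial.aeval (sigS s) P - MvPolynomial.map (Int.castRingHom ℚ) Q ∈ idlS s

-- evaluation of the universal two-variable object
lemma eval_aevalW (P : ℚ[X]) (c : ℚ[X]) :
    Polynomial.eval c (Polynomial.aeval
      ((Polynomial.C (X : ℚ[X]) + Polynomial.X : Polynomial (Polynomial ℚ))) P)
      = P.comp ((X : ℚ[X]) + c) := by
  rw [Polynomial.aeval_def, ← Polynomial.coe_evalRingHom, Polynomial.hom_eval₂]
  have hcomp : (Polynomial.evalRingHom c).comp (algebraMap ℚ (Polynomial (Polynomial ℚ)))
      = algebraMap ℚ ℚ[X] := Subsingleton.elim _ _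
  rw [hcomp]
  have hW : (Polynomial.evalRingHom c) (Polynomial.C (X : ℚ[X]) + Polynomial.X)
      = (X : ℚ[X]) + c := by
    simp
  rw [hW, comp_eq_aeval, Polynomial.aeval_def]

lemma decomp_exists (P : ℚ[X]) : ∃ R : Polynomial (Polynomial ℚ),
    Polynomial.aeval ((Polynomial.C (X : ℚ[X]) + Polynomial.X : Polynomial (Polynomial ℚ))) P
      = Polynomial.C P + Polynomial.C (bL P) * Polynomial.X
        + Polynomial.C (cL P) * Polynomial.X^2
        + (Polynomial.X^3 - Polynomial.X) * R := by
  set A := Polynomial (Polynomial ℚ)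
  set W : A := Polynomial.C (X : ℚ[X]) + Polynomial.X with hW
  set D : A := Polynomial.aeval W P - (Polynomial.C P + Polynomial.C (bL P) * Polynomial.X
        + Polynomial.C (cL P) * Polynomial.X^2) with hD
  have hroot0 : Polynomial.eval 0 D = 0 := by
    rw [hD, Polynomial.eval_sub, eval_aevalW]
    simp [comp_X]
  have hroot1 : Polynomial.eval 1 D = 0 := by
    rw [hD, Polynomial.eval_sub, eval_aevalW]
    have h1 : (X : ℚ[X]) + 1 = X + C 1 := by rw [C_1]
    rw [h1, comp_add_one_eq]
    simp
    try ring
  have hrootm1 : Polynomial.eval (-1) D = 0 := by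
    rw [hD, Polynomial.eval_sub, eval_aevalW]
    have h1 : (X : ℚ[X]) + (-1) = X - C 1 := by rw [C_1]; ring
    rw [h1, comp_sub_one_eq]
    simp
    try ring
  have h0 : (Polynomial.X : A) ∣ D := by
    have := (Polynomial.dvd_iff_isRoot (p := D) (a := 0)).mpr hroot0
    simpa using this
  obtain ⟨D1, hD1⟩ := h0
  have hr1 : Polynomial.eval 1 D1 = 0 := by
    have h := hroot1
    rw [hD1, Polynomial.eval_mul, Polynomial.eval_X, one_mul] at h
    exact h
  obtain ⟨D2, hD2⟩ := (Polynomial.dvd_iff_isRoot (p := D1) (a := 1)).mpr hr1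
  have hrm : Polynomial.eval (-1) D2 = 0 := by
    have h := hrootm1
    rw [hD1, hD2] at h
    simp only [Polynomial.eval_mul, Polynomial.eval_sub, Polynomial.eval_X,
      Polynomial.eval_C] at h
    have h2 : (2 : ℚ[X]) * Polynomial.eval (-1) D2 = 0 := by
      rw [← h]; ring
    rcases mul_eq_zero.mp h2 with h3 | h3
    · norm_num at h3
    · exact h3
  obtain ⟨D3, hD3⟩ := (Polynomial.dvd_iff_isRoot (p := D2) (a := -1)).mpr hrm
  refine ⟨D3, ?_⟩
  have hfact : D = ((Polynomial.X : A)^3 - Polynomial.X) * D3 := by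
    rw [hD1, hD2, hD3]
    show (Polynomial.X : ℚ[X][X]) * ((Polynomial.X - Polynomial.C 1) *
      ((Polynomial.X - Polynomial.C (-1)) * D3)) = ((Polynomial.X : ℚ[X][X])^3 - Polynomial.X) * D3
    rw [map_neg, Polynomial.C_1]
    ring
  have heq := hD
  rw [hfact] at heq
  linear_combination -heq
lemma hom_span {R S : Type*} [CommRing R] [CommRing S] (f : R →+* S) {s : Set R}
    {I : Ideal S} (h : ∀ x ∈ s, f x ∈ I) {a : R} (ha : a ∈ Ideal.span s) : f a ∈ I := by
  have hm := Ideal.mem_map_of_mem f ha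
  rw [Ideal.map_span] at hm
  refine Ideal.span_le.mpr ?_ hm
  rintro y ⟨x, hx, rfl⟩
  exact h x hx

lemma GS_succ_of {s : ℕ} {P : ℚ[X]} (hP : GS s P) (hb : GS s (bL P)) (hc : GS s (cL P)) :
    GS (s+1) P := by
  classical
  obtain ⟨Qa, ha⟩ := hP
  obtain ⟨Qb, hbq⟩ := hb
  obtain ⟨Qc, hcq⟩ := hc
  obtain ⟨R, hR⟩ := decomp_exists P
  set ρ : MvPolynomial (Fin s) ℚ →ₐ[ℚ] MvPolynomial (Fin (s+1)) ℚ :=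
    MvPolynomial.rename Fin.castSucc with hρ
  set ρz : MvPolynomial (Fin s) ℤ →ₐ[ℤ] MvPolynomial (Fin (s+1)) ℤ :=
    MvPolynomial.rename Fin.castSucc with hρz
  set σ' : MvPolynomial (Fin (s+1)) ℚ := ∑ i : Fin s, MvPolynomial.X (Fin.castSucc i) with hσ'
  have hρσ : ρ (sigS s) = σ' := by
    rw [sigS, map_sum]
    simp [hρ]
    rw [hσ']
  -- the ideal transfer
  have hidl : ∀ {F : MvPolynomial (Fin s) ℚ}, F ∈ idlS s → ρ F ∈ idlS (s+1) := by
    intro F hF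
    refine hom_span (ρ : MvPolynomial (Fin s) ℚ →+* MvPolynomial (Fin (s+1)) ℚ) ?_ hF
    rintro x ⟨i, rfl⟩
    have hgen : ρ (MvPolynomial.X i ^ 3 - MvPolynomial.X i)
        = MvPolynomial.X (Fin.castSucc i) ^ 3 - MvPolynomial.X (Fin.castSucc i) := by
      simp [hρ]
    show ρ (MvPolynomial.X i ^ 3 - MvPolynomial.X i) ∈ idlS (s+1)
    rw [hgen]
    exact Ideal.subset_span ⟨Fin.castSucc i, rfl⟩
  -- naturality of map with rename
  have hmapren : ∀ Q : MvPolynomial (Fin s) ℤ,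
      ρ (MvPolynomial.map (Int.castRingHom ℚ) Q)
        = MvPolynomial.map (Int.castRingHom ℚ) (ρz Q) := by
    intro Q
    simp only [hρ, hρz]
    exact (MvPolynomial.map_rename (Int.castRingHom ℚ) Fin.castSucc Q).symm
  -- renamed congruences
  have hA : Polynomial.aeval σ' P - MvPolynomial.map (Int.castRingHom ℚ) (ρz Qa)
      ∈ idlS (s+1) := by
    have := hidl ha
    rwa [map_sub, ← Polynomial.aeval_algHom_apply, hρσ, hmapren] at this
  have hB : Polynomial.aeval σ' (bL P) - MvPolynomial.map (Int.castRingHom ℚ) (ρz Qb)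
      ∈ idlS (s+1) := by
    have := hidl hbq
    rwa [map_sub, ← Polynomial.aeval_algHom_apply, hρσ, hmapren] at this
  have hC : Polynomial.aeval σ' (cL P) - MvPolynomial.map (Int.castRingHom ℚ) (ρz Qc)
      ∈ idlS (s+1) := by
    have := hidl hcq
    rwa [map_sub, ← Polynomial.aeval_algHom_apply, hρσ, hmapren] at this
  -- transfer the universal decomposition via ψ
  set x : MvPolynomial (Fin (s+1)) ℚ := MvPolynomial.X (Fin.last s) with hx
  set ψ : Polynomial (Polynomial ℚ) →ₐ[ℚ] MvPolynomial (Fin (s+1)) ℚ :=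
    Polynomial.aevalTower (Polynomial.aeval σ') x with hψ
  have hψW : ψ (Polynomial.C (X : ℚ[X]) + Polynomial.X) = sigS (s+1) := by
    rw [map_add, hψ, Polynomial.aevalTower_C, Polynomial.aevalTower_X, Polynomial.aeval_X]
    rw [sigS, Fin.sum_univ_castSucc, hσ']
  have hmain := congrArg ψ hR
  rw [← Polynomial.aeval_algHom_apply, hψW] at hmain
  simp only [map_add, map_mul, map_sub, map_pow, hψ, Polynomial.aevalTower_C,
    Polynomial.aevalTower_X] at hmain
  -- hmain : aeval (sigS (s+1)) P = aeval σ' P + aeval σ' (bL P) * x + aeval σ' (cL P) * x^2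
  --        + (x^3 - x) * ψ R
  refine ⟨ρz Qa + ρz Qb * MvPolynomial.X (Fin.last s)
      + ρz Qc * MvPolynomial.X (Fin.last s)^2, ?_⟩
  have hxmem : x^3 - x ∈ idlS (s+1) := Ideal.subset_span ⟨Fin.last s, rfl⟩
  have key : Polynomial.aeval (sigS (s+1)) P
      - MvPolynomial.map (Int.castRingHom ℚ) (ρz Qa + ρz Qb * MvPolynomial.X (Fin.last s)
        + ρz Qc * MvPolynomial.X (Fin.last s)^2)
      = (Polynomial.aeval σ' P - MvPolynomial.map (Int.castRingHom ℚ) (ρz Qa))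
        + ((Polynomial.aeval σ' (bL P) - MvPolynomial.map (Int.castRingHom ℚ) (ρz Qb)) * x
        + ((Polynomial.aeval σ' (cL P) - MvPolynomial.map (Int.castRingHom ℚ) (ρz Qc)) * x^2
        + (x^3 - x) * (Polynomial.aevalTower (Polynomial.aeval σ') x R))) := by
    rw [hmain]
    simp only [map_add, map_mul, map_pow, MvPolynomial.map_X, hx]
    ring
  rw [key]
  exact add_mem hA (add_mem (Ideal.mul_mem_right _ _ hB)
    (add_mem (Ideal.mul_mem_right _ _ hC) (Ideal.mul_mem_right _ _ hxmem)))

lemma sigS_zero : sigS 0 = 0 := by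
  rw [sigS, Finset.univ_eq_empty, Finset.sum_empty]

lemma idlS_zero : idlS 0 = ⊥ := by
  rw [idlS]
  have : (Set.range fun i : Fin 0 => MvPolynomial.X (R := ℚ) i ^ 3 - MvPolynomial.X i) = ∅ :=
    Set.range_eq_empty _
  rw [this, Ideal.span_empty]

lemma GS_zero_iff (P : ℚ[X]) : GS 0 P ↔ ∃ z : ℤ, P.eval 0 = z := by
  constructor
  · rintro ⟨Q, hQ⟩
    rw [idlS_zero, Ideal.mem_bot, sub_eq_zero, sigS_zero] at hQ
    refine ⟨MvPolynomial.constantCoeff Q, ?_⟩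
    have h1 : Polynomial.aeval (0 : MvPolynomial (Fin 0) ℚ) P
        = MvPolynomial.C (P.coeff 0) := by
      rw [Polynomial.aeval_def, Polynomial.eval₂_at_zero]
      rfl
    have := congrArg MvPolynomial.constantCoeff hQ
    rw [h1, MvPolynomial.constantCoeff_map] at this
    rw [← Polynomial.coeff_zero_eq_eval_zero]
    simpa using this
  · rintro ⟨z, hz⟩
    refine ⟨MvPolynomial.C z, ?_⟩
    rw [idlS_zero, Ideal.mem_bot, sub_eq_zero, sigS_zero]
    rw [Polynomial.aeval_def, Polynomial.eval₂_at_zero, MvPolynomial.map_C]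
    rw [Polynomial.coeff_zero_eq_eval_zero, hz]
    rfl

lemma aeval_map_comm {s t : ℕ} {K : Type*} [CommRing K] (f : ℤ →+* K)
    (vK : Fin s → MvPolynomial (Fin t) K) (vZ : Fin s → MvPolynomial (Fin t) ℤ)
    (hv : ∀ i, vK i = MvPolynomial.map f (vZ i)) (Q : MvPolynomial (Fin s) ℤ) :
    MvPolynomial.aeval vK (MvPolynomial.map f Q)
      = MvPolynomial.map f (MvPolynomial.aeval vZ Q) := by
  induction Q using MvPolynomial.induction_on with
  | C a => simp [MvPolynomial.algebraMap_eq]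
  | add p q hp hq =>
      simp only [map_add]
      rw [hp, hq]
  | mul_X p i hp =>
      simp only [map_mul, MvPolynomial.map_X, MvPolynomial.aeval_X]
      rw [hp, hv i]

lemma even_of_map_zmod_zero {s : ℕ} (F : MvPolynomial (Fin s) ℤ)
    (h2 : MvPolynomial.map (Int.castRingHom (ZMod 2)) F = 0) : ∃ D, F = 2 * D := by
  have hdvd : MvPolynomial.C (2:ℤ) ∣ F := by
    rw [MvPolynomial.C_dvd_iff_dvd_coeff]
    intro i
    have := congrArg (fun G => MvPolynomial.coeff i G) h2
    simp only [MvPolynomial.coeff_map, MvPolynomial.coeff_zero] at this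
    exact (ZMod.intCast_zmod_eq_zero_iff_dvd _ 2).mp this
  obtain ⟨D, hD⟩ := hdvd
  exact ⟨D, by rw [hD, map_ofNat]⟩

-- the substitution of the last variable by a constant e with e³ = e
lemma GS_subst {s : ℕ} {P : ℚ[X]} {Q : MvPolynomial (Fin (s+1)) ℤ}
    (hQ : Polynomial.aeval (sigS (s+1)) P - MvPolynomial.map (Int.castRingHom ℚ) Q
      ∈ idlS (s+1)) (e : ℤ) (he : e^3 = e) :
    Polynomial.aeval (sigS s) (P.comp (X + C (e:ℚ)))
      - MvPolynomial.map (Int.castRingHom ℚ)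
          (MvPolynomial.aeval (Fin.lastCases (MvPolynomial.C e) MvPolynomial.X) Q)
      ∈ idlS s := by
  classical
  set vQ : Fin (s+1) → MvPolynomial (Fin s) ℚ :=
    Fin.lastCases (MvPolynomial.C (e:ℚ)) MvPolynomial.X with hvQ
  set vZ : Fin (s+1) → MvPolynomial (Fin s) ℤ :=
    Fin.lastCases (MvPolynomial.C e) MvPolynomial.X with hvZ
  set φ : MvPolynomial (Fin (s+1)) ℚ →ₐ[ℚ] MvPolynomial (Fin s) ℚ :=
    MvPolynomial.aeval vQ with hφ
  have hidl : ∀ {F : MvPolynomial (Fin (s+1)) ℚ}, F ∈ idlS (s+1) → φ F ∈ idlS s := by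
    intro F hF
    refine hom_span (φ : MvPolynomial (Fin (s+1)) ℚ →+* MvPolynomial (Fin s) ℚ) ?_ hF
    rintro y ⟨i, rfl⟩
    show φ (MvPolynomial.X i ^ 3 - MvPolynomial.X i) ∈ idlS s
    induction i using Fin.lastCases with
    | last =>
        have : φ (MvPolynomial.X (Fin.last s) ^ 3 - MvPolynomial.X (Fin.last s)) = 0 := by
          simp only [map_sub, map_pow, hφ, MvPolynomial.aeval_X, hvQ,
            Fin.lastCases_last]
          rw [← map_pow, ← map_sub]
          have he' : ((e:ℚ))^3 - (e:ℚ) = 0 := by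
            have hc : ((e:ℚ))^3 = ((e^3 : ℤ) : ℚ) := by push_cast; ring
            rw [hc, he, sub_self]
          rw [he', map_zero]
        rw [this]; exact zero_mem _
    | cast j =>
        have : φ (MvPolynomial.X (Fin.castSucc j) ^ 3 - MvPolynomial.X (Fin.castSucc j))
            = MvPolynomial.X j ^ 3 - MvPolynomial.X j := by
          simp only [map_sub, map_pow, hφ, MvPolynomial.aeval_X, hvQ,
            Fin.lastCases_castSucc]
        rw [this]
        exact Ideal.subset_span ⟨j, rfl⟩
  have hφσ : φ (sigS (s+1)) = sigS s + MvPolynomial.C (e:ℚ) := by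
    rw [sigS, map_sum, Fin.sum_univ_castSucc]
    simp only [hφ, MvPolynomial.aeval_X, hvQ, Fin.lastCases_castSucc, Fin.lastCases_last]
    rw [sigS]
  have hcomp : Polynomial.aeval (φ (sigS (s+1))) P
      = Polynomial.aeval (sigS s) (P.comp (X + C (e:ℚ))) := by
    rw [Polynomial.aeval_comp]
    congr 1
    rw [map_add, Polynomial.aeval_X, Polynomial.aeval_C, hφσ, MvPolynomial.algebraMap_eq]
  have hmap : φ (MvPolynomial.map (Int.castRingHom ℚ) Q)
      = MvPolynomial.map (Int.castRingHom ℚ) (MvPolynomial.aeval vZ Q) := by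
    rw [hφ]
    apply aeval_map_comm
    intro i
    induction i using Fin.lastCases with
    | last => simp [hvQ, hvZ]
    | cast j => simp [hvQ, hvZ]
  have := hidl hQ
  rwa [map_sub, ← Polynomial.aeval_algHom_apply, hcomp, hmap] at this

lemma GS_bL_cL_of_succ {s : ℕ} {P : ℚ[X]} (h : GS (s+1) P) : GS s (bL P) ∧ GS s (cL P) := by
  classical
  obtain ⟨Q, hQ⟩ := h
  have h1 := GS_subst hQ 1 (by norm_num)
  have hm := GS_subst hQ (-1) (by norm_num)
  have h0 := GS_subst hQ 0 (by norm_num)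
  set E1 := MvPolynomial.aeval (Fin.lastCases (MvPolynomial.C (1:ℤ)) MvPolynomial.X) Q with hE1d
  set Em := MvPolynomial.aeval (Fin.lastCases (MvPolynomial.C (-1:ℤ)) MvPolynomial.X) Q with hEmd
  set E0 := MvPolynomial.aeval (Fin.lastCases (MvPolynomial.C (0:ℤ)) MvPolynomial.X) Q with hE0d
  simp only [Int.cast_one, Int.cast_neg, Int.cast_zero] at h1 hm h0
  rw [map_neg, ← sub_eq_add_neg] at hm
  rw [map_zero, add_zero, comp_X] at h0
  -- parity facts
  set mQ := MvPolynomial.map (Int.castRingHom (ZMod 2)) Q with hmQ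
  set w : Fin (s+1) → MvPolynomial (Fin s) (ZMod 2) :=
    Fin.lastCases (MvPolynomial.C (1 : ZMod 2)) MvPolynomial.X with hw
  have hmap1 : MvPolynomial.map (Int.castRingHom (ZMod 2)) E1 = MvPolynomial.aeval w mQ := by
    rw [hE1d, ← aeval_map_comm (Int.castRingHom (ZMod 2)) w _ ?_ Q]
    intro i
    induction i using Fin.lastCases with
    | last => simp [hw]
    | cast j => simp [hw]
  have hmapm : MvPolynomial.map (Int.castRingHom (ZMod 2)) Em = MvPolynomial.aeval w mQ := by
    rw [hEmd, ← aeval_map_comm (Int.castRingHom (ZMod 2)) w _ ?_ Q]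
    intro i
    induction i using Fin.lastCases with
    | last =>
        simp only [hw, Fin.lastCases_last, MvPolynomial.map_C]
        congr 1
    | cast j => simp [hw]
  have h2z : (2 : MvPolynomial (Fin s) (ZMod 2)) = 0 := by
    have h2' : (2 : MvPolynomial (Fin s) (ZMod 2)) = MvPolynomial.C (2 : ZMod 2) :=
      (map_ofNat MvPolynomial.C 2).symm
    rw [h2', show (2 : ZMod 2) = 0 by decide, map_zero]
  obtain ⟨Db, hDb⟩ := even_of_map_zmod_zero (E1 - Em)
    (by rw [map_sub, hmap1, hmapm, sub_self])
  obtain ⟨Dc, hDc⟩ := even_of_map_zmod_zero (E1 + Em - 2 * E0)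
    (by rw [map_sub, map_add, map_mul, hmap1, hmapm, map_ofNat, h2z, zero_mul, sub_zero,
          ← two_mul, h2z, zero_mul])
  set mp := MvPolynomial.map (Int.castRingHom ℚ) with hmp
  have hmd : mp E1 - mp Em = (2:ℚ) • mp Db := by
    rw [← map_sub, hDb, map_mul, map_ofNat, MvPolynomial.smul_eq_C_mul, map_ofNat]
  have hmc : mp E1 + mp Em - 2 * mp E0 = (2:ℚ) • mp Dc := by
    have e1 : (2 : MvPolynomial (Fin s) ℚ) * mp E0 = mp (2 * E0) := by
      rw [map_mul, map_ofNat]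
    rw [e1, ← map_add, ← map_sub, hDc, map_mul, map_ofNat,
      MvPolynomial.smul_eq_C_mul, map_ofNat]
  constructor
  · refine ⟨Db, ?_⟩
    have hz : ((Polynomial.aeval (sigS s)) (P.comp (X + C 1)) - mp E1)
        - ((Polynomial.aeval (sigS s)) (P.comp (X - C 1)) - mp Em) ∈ idlS s := sub_mem h1 hm
    have key : Polynomial.aeval (sigS s) (bL P) - mp Db
        = (2:ℚ)⁻¹ • (((Polynomial.aeval (sigS s)) (P.comp (X + C 1)) - mp E1)
          - ((Polynomial.aeval (sigS s)) (P.comp (X - C 1)) - mp Em)) := by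
      have hZ : ((Polynomial.aeval (sigS s)) (P.comp (X + C 1)) - mp E1)
          - ((Polynomial.aeval (sigS s)) (P.comp (X - C 1)) - mp Em)
          = ((Polynomial.aeval (sigS s)) (P.comp (X + C 1))
            - (Polynomial.aeval (sigS s)) (P.comp (X - C 1))) - (2:ℚ) • mp Db := by
        rw [← hmd]; abel
      rw [hZ, bL_apply, map_smul, map_sub]
      module
    rw [key, MvPolynomial.smul_eq_C_mul]
    exact Ideal.mul_mem_left _ _ hz
  · refine ⟨Dc, ?_⟩
    have hz : (((Polynomial.aeval (sigS s)) (P.comp (X + C 1)) - mp E1)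
        + ((Polynomial.aeval (sigS s)) (P.comp (X - C 1)) - mp Em))
        - (2:ℚ) • ((Polynomial.aeval (sigS s)) P - mp E0) ∈ idlS s := by
      refine sub_mem (add_mem h1 hm) ?_
      rw [MvPolynomial.smul_eq_C_mul]
      exact Ideal.mul_mem_left _ _ h0
    have key : Polynomial.aeval (sigS s) (cL P) - mp Dc
        = (2:ℚ)⁻¹ • ((((Polynomial.aeval (sigS s)) (P.comp (X + C 1)) - mp E1)
          + ((Polynomial.aeval (sigS s)) (P.comp (X - C 1)) - mp Em))
          - (2:ℚ) • ((Polynomial.aeval (sigS s)) P - mp E0)) := by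
      have hZ : (((Polynomial.aeval (sigS s)) (P.comp (X + C 1)) - mp E1)
          + ((Polynomial.aeval (sigS s)) (P.comp (X - C 1)) - mp Em))
          - (2:ℚ) • ((Polynomial.aeval (sigS s)) P - mp E0)
          = ((Polynomial.aeval (sigS s)) (P.comp (X + C 1))
            + (Polynomial.aeval (sigS s)) (P.comp (X - C 1))
            - (2:ℚ) • (Polynomial.aeval (sigS s)) P) - (2:ℚ) • mp Dc := by
        have h2m : (2 : MvPolynomial (Fin s) ℚ) * mp E0 = (2:ℚ) • mp E0 := by
          rw [MvPolynomial.smul_eq_C_mul, map_ofNat]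
        rw [← hmc, h2m]
        module
      rw [hZ, cL_apply, map_smul, map_sub, map_add, map_smul]
      module
    rw [key, MvPolynomial.smul_eq_C_mul]
    exact Ideal.mul_mem_left _ _ hz

end MvStuff

lemma GS_sub {s : ℕ} {P R : ℚ[X]} (hP : GS s P) (hR : GS s R) : GS s (P - R) := by
  obtain ⟨Q1, h1⟩ := hP
  obtain ⟨Q2, h2⟩ := hR
  refine ⟨Q1 - Q2, ?_⟩
  have := sub_mem h1 h2
  convert this using 1
  rw [map_sub, map_sub]
  ring

lemma preserves_of_mem_CSub : ∀ (s : ℕ) {P : ℚ[X]}, P ∈ CSub → GS s P := by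
  intro s
  induction s with
  | zero => intro P hP; exact (GS_zero_iff P).mpr (eval_zero_mem hP)
  | succ s ih => intro P hP; exact GS_succ_of (ih hP) (ih (bL_mem hP)) (ih (cL_mem hP))

lemma GS_all_bL {P : ℚ[X]} (h : ∀ s, GS s P) : ∀ s, GS s (bL P) :=
  fun s => (GS_bL_cL_of_succ (h (s+1))).1

lemma GS_all_cL {P : ℚ[X]} (h : ∀ s, GS s P) : ∀ s, GS s (cL P) :=
  fun s => (GS_bL_cL_of_succ (h (s+1))).2

lemma GS_all_cL_pow {P : ℚ[X]} (h : ∀ s, GS s P) (m : ℕ) : ∀ s, GS s ((cL^m) P) := by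
  induction m generalizing P with
  | zero => simpa using h
  | succ m ih =>
      intro s
      have h1 : ∀ s, GS s ((cL^m) (cL P)) := ih (GS_all_cL h)
      have : (cL^(m+1)) P = (cL^m) (cL P) := by
        rw [pow_succ, Module.End.mul_apply]
      rw [this]
      exact h1 s

lemma coeff_int_multiple {P : ℚ[X]} (h : ∀ s, GS s P) (n : ℕ) (hdeg : P.natDegree ≤ n) :
    ∃ z : ℤ, (n.factorial : ℚ) * P.coeff n = 2^(n/2) * z := by
  obtain ⟨q, hq⟩ := exists_binom_repr n P hdeg
  have hqn : q n = (n.factorial : ℚ) * P.coeff n := by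
    rw [coeff_top_of_repr hq]
    field_simp
  rcases Nat.even_or_odd n with he | ho
  · obtain ⟨m, hm⟩ := he
    have hn2 : n = 2*m := by omega
    have hcm : (cL^m) P = (q n * ((2:ℚ)^m)⁻¹) • (1 : ℚ[X]) := by
      rw [hq, map_sum, Finset.sum_range_succ]
      have hzero : ∀ p ∈ Finset.range n, (cL^m) (q p • binomPoly p) = 0 := by
        intro p hp
        simp only [Finset.mem_range] at hp
        rw [map_smul, cL_pow_binom_low m p (by omega), smul_zero]
      rw [Finset.sum_congr rfl hzero, Finset.sum_const_zero, zero_add, map_smul]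
      rw [show binomPoly n = binomPoly (2*m) from by rw [← hn2], cL_pow_binom_exact, smul_smul]
    obtain ⟨z, hz⟩ := (GS_zero_iff _).mp (GS_all_cL_pow h m 0)
    rw [hcm, eval_smul, eval_one, smul_eq_mul, mul_one] at hz
    refine ⟨z, ?_⟩
    rw [← hqn]
    have h2 : ((2:ℚ)^m) ≠ 0 := by positivity
    have : q n = 2^m * z := by
      field_simp at hz
      linarith [hz]
    rw [this, show n/2 = m from by omega]
  · obtain ⟨m, hm⟩ := ho
    have hn2 : n = 2*m+1 := by omega
    have hcm : (cL^m) (bL P) = (q n * ((2:ℚ)^m)⁻¹) • (1 : ℚ[X]) := by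
      rw [hq, map_sum, map_sum, Finset.sum_range_succ]
      have hzero : ∀ p ∈ Finset.range n, (cL^m) (bL (q p • binomPoly p)) = 0 := by
        intro p hp
        simp only [Finset.mem_range] at hp
        rw [map_smul, map_smul, cL_pow_bL_binom_low m p (by omega), smul_zero]
      rw [Finset.sum_congr rfl hzero, Finset.sum_const_zero, zero_add, map_smul, map_smul]
      rw [show binomPoly n = binomPoly (2*m+1) from by rw [← hn2], cL_pow_bL_binom_exact,
        smul_smul]
    obtain ⟨z, hz⟩ := (GS_zero_iff _).mp (GS_all_cL_pow (GS_all_bL h) m 0)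
    rw [hcm, eval_smul, eval_one, smul_eq_mul, mul_one] at hz
    refine ⟨z, ?_⟩
    rw [← hqn]
    have h2 : ((2:ℚ)^m) ≠ 0 := by positivity
    have : q n = 2^m * z := by
      field_simp at hz
      linarith [hz]
    rw [this, show n/2 = m from by omega]

lemma mem_CSub_of_preserves : ∀ (n : ℕ) (P : ℚ[X]), P.natDegree ≤ n → (∀ s, GS s P) →
    P ∈ CSub := by
  intro n
  induction n with
  | zero =>
      intro P hdeg h
      obtain ⟨z, hz⟩ := (GS_zero_iff P).mp (h 0)
      have hP : P = z • gPoly 0 := by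
        rw [eq_C_of_natDegree_le_zero hdeg]
        rw [Polynomial.coeff_zero_eq_eval_zero, hz]
        rw [← Int.cast_smul_eq_zsmul ℚ]
        rw [gPoly, binomPoly_zero_eq]
        rw [pow_zero, one_smul, smul_eq_C_mul, mul_one]
      rw [hP]
      exact zsmul_mem (gPoly_mem 0) z
  | succ n ih =>
      intro P hdeg h
      obtain ⟨z, hz⟩ := coeff_int_multiple h (n+1) hdeg
      set R := P - z • gPoly (n+1) with hRdef
      have hgmem : z • gPoly (n+1) ∈ CSub := zsmul_mem (gPoly_mem (n+1)) z
      have hcoeffg : (z • gPoly (n+1)).coeff (n+1)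
          = (z:ℚ) * 2^((n+1)/2) * (((n+1).factorial : ℚ))⁻¹ := by
        rw [← Int.cast_smul_eq_zsmul ℚ, coeff_smul, gPoly, coeff_smul, binomPoly_coeff_self]
        simp [smul_eq_mul]
        ring
      have hcP : P.coeff (n+1) = 2^((n+1)/2) * (z:ℚ) * (((n+1).factorial : ℚ))⁻¹ := by
        have hfac : ((n+1).factorial : ℚ) ≠ 0 := by
          exact_mod_cast Nat.cast_ne_zero.mpr (n+1).factorial_ne_zero
        field_simp at hz ⊢
        linarith [hz]
      have hcoeffR : R.coeff (n+1) = 0 := by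
        rw [hRdef, coeff_sub, hcoeffg, hcP]
        ring
      have hdegR : R.natDegree ≤ n := by
        rw [natDegree_le_iff_coeff_eq_zero]
        intro k hk
        rcases Nat.lt_or_ge (n+1) k with hk2 | hk2
        · rw [hRdef, coeff_sub, coeff_eq_zero_of_natDegree_lt (lt_of_le_of_lt hdeg hk2),
            ← Int.cast_smul_eq_zsmul ℚ, coeff_smul, gPoly, coeff_smul,
            binomPoly_coeff_eq_zero hk2, smul_zero, smul_zero, sub_zero]
        · have : k = n+1 := by omega
          rw [this]; exact hcoeffR
      have hGSR : ∀ s, GS s R := fun s => GS_sub (h s) (preserves_of_mem_CSub s hgmem)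
      have hRmem := ih R hdegR hGSR
      have : P = R + z • gPoly (n+1) := by rw [hRdef]; ring
      rw [this]
      exact add_mem hRmem hgmem

theorem preservesSumsOfSigns_iff_binomial_expansion (P : Polynomial ℚ) :
    PreservesSumsOfSigns P ↔
      ∃ (N : ℕ) (n : ℕ → ℤ), (∀ p, (2 : ℤ) ^ (p / 2) ∣ n p) ∧
        P = ∑ p ∈ Finset.range (N + 1), (n p : ℚ) • binomPoly p := by
  rw [← mem_CSub_iff]
  constructor
  · intro h
    exact mem_CSub_of_preserves P.natDegree P le_rfl (fun s => h s)
  · intro h s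
    exact preserves_of_mem_CSub s h
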